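/- arXiv:2205.13596 — 3 statements merged into one kernel-verified Lean document; each statement's English description precedes it below -/
import Mathlib

section
/- Let U be an n×n real positive semidefinite matrix. Then tan(U) = { W + Wᵀ : W ∈ ℝ^{n×n}, and the 2n×2n block matrix [[U, W],[Wᵀ, βI]] is positive semidefinite for some β ∈ ℝ }. -/
open Matrix

/-- The tangent space of the psd cone at a psd matrix `U`:
`tan(U) = { W + Wᵀ : range W ⊆ range U }`. -/
def tanSpace {n : ℕ} (U : Matrix (Fin n) (Fin n) ℝ) : Set (Matrix (Fin n) (Fin n) ℝ) :=
  {V | ∃ W : Matrix (Fin n) (Fin n) ℝ, V = W + Wᵀ ∧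
    LinearMap.range W.mulVecLin ≤ LinearMap.range U.mulVecLin}

lemma quad_aux {a b : ℝ} (h : ∀ t : ℝ, 0 ≤ 2 * a * t + b * t ^ 2) : a = 0 := by
  have hb : 0 ≤ b := by nlinarith [h 1, h (-1)]
  by_contra ha
  have hb1 : (0:ℝ) < b + 1 := by linarith
  have e : 2 * a * (-a / (b + 1)) + b * (-a / (b + 1)) ^ 2
      = -(a ^ 2 * (b + 2)) / (b + 1) ^ 2 := by
    field_simp; ring
  have h' := h (-a / (b + 1))
  rw [e] at h'
  have ha2 : 0 < a ^ 2 := by positivity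
  have hpos : 0 < a ^ 2 * (b + 2) := by nlinarith
  have : -(a ^ 2 * (b + 2)) / (b + 1) ^ 2 < 0 := by
    apply div_neg_of_neg_of_pos
    · linarith
    · positivity
  linarith

lemma quad_le {n : ℕ} (M : Matrix (Fin n) (Fin n) ℝ) (x : Fin n → ℝ) :
    x ⬝ᵥ M *ᵥ x ≤ (∑ i, ∑ j, |M i j|) * (x ⬝ᵥ x) := by
  have hS : ∀ i, x i ^ 2 ≤ x ⬝ᵥ x := fun i => by
    have := Finset.single_le_sum (f := fun k => x k * x k)
      (fun k _ => mul_self_nonneg _) (Finset.mem_univ i)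
    simpa [dotProduct, sq] using this
  calc x ⬝ᵥ M *ᵥ x = ∑ i, ∑ j, x i * (M i j * x j) := by
        simp [dotProduct, mulVec, Finset.mul_sum]
    _ ≤ ∑ i, ∑ j, |M i j| * (x ⬝ᵥ x) := by
        refine Finset.sum_le_sum fun i _ => Finset.sum_le_sum fun j _ => ?_
        have h2 : |x i| * |x j| ≤ x ⬝ᵥ x := by
          nlinarith [hS i, hS j, sq_nonneg (|x i| - |x j|), sq_abs (x i), sq_abs (x j)]
        calc x i * (M i j * x j) ≤ |x i * (M i j * x j)| := le_abs_self _
          _ = |M i j| * (|x i| * |x j|) := by rw [abs_mul, abs_mul]; ring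
          _ ≤ |M i j| * (x ⬝ᵥ x) := mul_le_mul_of_nonneg_left h2 (abs_nonneg _)
    _ = (∑ i, ∑ j, |M i j|) * (x ⬝ᵥ x) := by
        simp [Finset.sum_mul]

lemma sym_dot {n : ℕ} {U : Matrix (Fin n) (Fin n) ℝ} (hU : U.IsHermitian)
    (a b : Fin n → ℝ) : a ⬝ᵥ U *ᵥ b = b ⬝ᵥ U *ᵥ a := by
  have hT : Uᵀ = U := by
    rw [← conjTranspose_eq_transpose_of_trivial]; exact hU
  rw [dotProduct_mulVec, dotProduct_comm, ← mulVec_transpose, hT]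

local notation "⟪" x ", " y "⟫" => @inner ℝ _ _ x y

lemma mem_range_of_dot {n : ℕ} {U : Matrix (Fin n) (Fin n) ℝ} (hU : U.PosSemidef)
    {y : Fin n → ℝ} (h : ∀ z, U *ᵥ z = 0 → z ⬝ᵥ y = 0) :
    y ∈ LinearMap.range U.mulVecLin := by
  set T := Matrix.toEuclideanLin U with hT
  set S := LinearMap.range T with hSdef
  have horth : ∀ z : EuclideanSpace ℝ (Fin n), z ∈ Sᗮ →
      U *ᵥ (WithLp.equiv 2 (Fin n → ℝ) z) = 0 := by
    intro z hz
    rw [Submodule.mem_orthogonal] at hz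
    have h0 : ⟪T z, z⟫ = 0 := hz (T z) (LinearMap.mem_range_self _ _)
    have h1 : (U *ᵥ (WithLp.equiv 2 (Fin n → ℝ) z)) ⬝ᵥ (WithLp.equiv 2 (Fin n → ℝ) z) = 0 := by
      have heq : T z = (WithLp.equiv 2 (Fin n → ℝ)).symm (U *ᵥ (WithLp.equiv 2 (Fin n → ℝ) z)) :=
        Matrix.toEuclideanLin_apply U z
      rw [heq] at h0
      rw [show z = (WithLp.equiv 2 (Fin n → ℝ)).symm ((WithLp.equiv 2 (Fin n → ℝ)) z) by simp]
        at h0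
      rw [show ∀ a b : Fin n → ℝ, ⟪(WithLp.equiv 2 (Fin n → ℝ)).symm a, (WithLp.equiv 2 (Fin n → ℝ)).symm b⟫ = star a ⬝ᵥ b from fun a b => dotProduct_comm _ _] at h0
      simpa using h0
    rw [dotProduct_comm] at h1
    exact (hU.dotProduct_mulVec_zero_iff (WithLp.equiv 2 (Fin n → ℝ) z)).mp (by simpa using h1)
  have hy : (WithLp.equiv 2 (Fin n → ℝ)).symm y ∈ Sᗮᗮ := by
    rw [Submodule.mem_orthogonal]
    intro u hu
    have hz := horth u hu
    have hh := h _ hz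
    rw [show u = (WithLp.equiv 2 (Fin n → ℝ)).symm ((WithLp.equiv 2 (Fin n → ℝ)) u) by simp,
      show ∀ a b : Fin n → ℝ, ⟪(WithLp.equiv 2 (Fin n → ℝ)).symm a, (WithLp.equiv 2 (Fin n → ℝ)).symm b⟫ = star a ⬝ᵥ b from fun a b => dotProduct_comm _ _]
    simpa using hh
  rw [Submodule.orthogonal_orthogonal] at hy
  obtain ⟨x, hx⟩ := hy
  refine ⟨(WithLp.equiv 2 (Fin n → ℝ)) x, ?_⟩
  have heq : T x = (WithLp.equiv 2 (Fin n → ℝ)).symm (U *ᵥ (WithLp.equiv 2 (Fin n → ℝ) x)) :=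
    Matrix.toEuclideanLin_apply U x
  rw [heq] at hx
  have := congrArg (WithLp.equiv 2 (Fin n → ℝ)) hx
  simpa [mulVecLin] using this

/-- `tan(U) = { W + Wᵀ : [[U, W], [Wᵀ, βI]] ⪰ 0 for some β ∈ ℝ }`. -/
theorem stmt_4 (n : ℕ) (U : Matrix (Fin n) (Fin n) ℝ) (hU : U.PosSemidef) :
    tanSpace U =
      {V : Matrix (Fin n) (Fin n) ℝ | ∃ W : Matrix (Fin n) (Fin n) ℝ, ∃ β : ℝ,
        V = W + Wᵀ ∧
        (Matrix.fromBlocks U W Wᵀ (β • (1 : Matrix (Fin n) (Fin n) ℝ))).PosSemidef} := by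
  ext V
  simp only [tanSpace, Set.mem_setOf_eq]
  constructor
  · rintro ⟨W, rfl, hW⟩
    obtain ⟨A, rfl⟩ : ∃ A : Matrix (Fin n) (Fin n) ℝ, W = U * A := by
      have h : ∀ j, ∃ v, U *ᵥ v = W *ᵥ Pi.single j 1 := fun j => hW ⟨Pi.single j 1, rfl⟩
      choose v hv using h
      refine ⟨Matrix.of fun i j => v j i, ?_⟩
      ext i j
      have h2 := congrFun (hv j) i
      simp only [mulVec, dotProduct, of_apply, mul_apply] at h2 ⊢
      rw [h2]
      simp [Pi.single_apply, mul_ite]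
    set M := Aᵀ * U * A with hM
    set β := ∑ i, ∑ j, |M i j| with hβ
    refine ⟨U * A, β, rfl, posSemidef_iff_dotProduct_mulVec.mpr ⟨?_, ?_⟩⟩
    · refine IsHermitian.fromBlocks hU.1 ?_ ?_
      · rw [conjTranspose_eq_transpose_of_trivial]
      · simp [Matrix.IsHermitian]
    · intro x
      set x₁ := fun i => x (Sum.inl i) with hx1
      set x₂ := fun i => x (Sum.inr i) with hx2
      set z := A *ᵥ x₂ with hz
      have f1 : (U*A) *ᵥ x₂ = U *ᵥ z := by rw [hz, mulVec_mulVec]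
      have key : star x ⬝ᵥ (fromBlocks U (U*A) (U*A)ᵀ (β • (1:Matrix (Fin n) (Fin n) ℝ))) *ᵥ x
          = (x₁ + z) ⬝ᵥ U *ᵥ (x₁ + z) + (β * (x₂ ⬝ᵥ x₂) - x₂ ⬝ᵥ M *ᵥ x₂) := by
        rw [star_trivial]
        have hblock : (fromBlocks U (U*A) (U*A)ᵀ (β • (1:Matrix (Fin n) (Fin n) ℝ))) *ᵥ x
            = Sum.elim (U *ᵥ x₁ + (U*A) *ᵥ x₂)
              ((U*A)ᵀ *ᵥ x₁ + (β • (1:Matrix (Fin n) (Fin n) ℝ)) *ᵥ x₂) := by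
          rw [fromBlocks_mulVec]; rfl
        rw [hblock]
        have hdot : ∀ (u : Fin n → ℝ) (w : Fin n → ℝ),
            x ⬝ᵥ Sum.elim u w = x₁ ⬝ᵥ u + x₂ ⬝ᵥ w := by
          intro u w
          simp [dotProduct, Fintype.sum_sum_type, hx1, hx2]
        rw [hdot, dotProduct_add, dotProduct_add]
        have f2 : x₂ ⬝ᵥ (U*A)ᵀ *ᵥ x₁ = z ⬝ᵥ U *ᵥ x₁ := by
          rw [mulVec_transpose, dotProduct_comm, ← dotProduct_mulVec, f1, sym_dot hU.1]
        have f3 : x₂ ⬝ᵥ (β • (1:Matrix (Fin n) (Fin n) ℝ)) *ᵥ x₂ = β * (x₂ ⬝ᵥ x₂) := by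
          rw [smul_mulVec, one_mulVec, dotProduct_smul]; rfl
        have f4 : x₂ ⬝ᵥ M *ᵥ x₂ = z ⬝ᵥ U *ᵥ z := by
          rw [hM, Matrix.mul_assoc, ← mulVec_mulVec, dotProduct_mulVec, vecMul_transpose,
            ← hz, f1]
        have f5 : z ⬝ᵥ U *ᵥ x₁ = x₁ ⬝ᵥ U *ᵥ z := sym_dot hU.1 z x₁
        rw [f1, f2, f3, f4, mulVec_add, dotProduct_add, add_dotProduct, add_dotProduct, f5]
        ring
      rw [key]
      have h1 : 0 ≤ (x₁ + z) ⬝ᵥ U *ᵥ (x₁ + z) := by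
        have := hU.dotProduct_mulVec_nonneg (x₁ + z); rwa [star_trivial] at this
      have h2 : x₂ ⬝ᵥ M *ᵥ x₂ ≤ β * (x₂ ⬝ᵥ x₂) := quad_le M x₂
      linarith
  · rintro ⟨W, β, rfl, hpsd⟩
    refine ⟨W, rfl, ?_⟩
    rintro _ ⟨v, rfl⟩
    apply mem_range_of_dot hU
    intro z hz
    have hWz : Wᵀ *ᵥ z = 0 := by
      ext j
      apply quad_aux (b := β)
      intro t
      set s : Fin n → ℝ := Pi.single j 1 with hs
      have hq := hpsd.dotProduct_mulVec_nonneg (Sum.elim z (t • s))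
      rw [star_trivial] at hq
      have hblock : (fromBlocks U W Wᵀ (β • (1:Matrix (Fin n) (Fin n) ℝ))) *ᵥ
          (Sum.elim z (t • s))
          = Sum.elim (U *ᵥ z + W *ᵥ (t • s))
            (Wᵀ *ᵥ z + (β • (1:Matrix (Fin n) (Fin n) ℝ)) *ᵥ (t • s)) := by
        rw [fromBlocks_mulVec]; rfl
      rw [hblock] at hq
      have hdot : ∀ (u w : Fin n → ℝ),
          (Sum.elim z (t • s)) ⬝ᵥ Sum.elim u w = z ⬝ᵥ u + (t • s) ⬝ᵥ w := by
        intro u w; simp [dotProduct, Fintype.sum_sum_type]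
      rw [hdot, hz, zero_add] at hq
      have e1 : z ⬝ᵥ W *ᵥ (t • s) = t * (Wᵀ *ᵥ z) j := by
        rw [mulVec_smul, dotProduct_smul, smul_eq_mul]
        congr 1
        simp [hs, mulVec, dotProduct, Pi.single_apply, mul_ite, mul_comm]
      have e2 : (t • s) ⬝ᵥ (Wᵀ *ᵥ z + (β • (1:Matrix (Fin n) (Fin n) ℝ)) *ᵥ (t • s))
          = t * (Wᵀ *ᵥ z) j + β * t ^ 2 := by
        rw [dotProduct_add, smul_dotProduct, smul_dotProduct, smul_mulVec, one_mulVec]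
        simp [hs, single_dotProduct, dotProduct_smul, Pi.single_eq_same, smul_eq_mul]
        ring
      rw [e1, e2] at hq
      calc (0:ℝ) ≤ t * (Wᵀ *ᵥ z) j + (t * (Wᵀ *ᵥ z) j + β * t ^ 2) := hq
        _ = 2 * (Wᵀ *ᵥ z) j * t + β * t ^ 2 := by ring
    rw [mulVecLin_apply, dotProduct_mulVec, ← mulVec_transpose, hWz, zero_dotProduct]
end

section
/- Consider the 4×4 SDP: sup x₂ + x₃ subject to x₁A₁ + x₂A₂ + x₃A₃ ⪯ B, where A₁ = E₁₁, A₂ = E₂₂ + E₁₃ + E₃₁, A₃ = E₃₃ + E₂₄ + E₄₂, B = E₁₁ + E₂₂ (E_{ij} denotes the matrix unit). Then every feasible x satisfies x₂ = x₃ = 0, so the optimal value of this SDP is 0. -/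
open Matrix

lemma quad_aux17 (a b : ℝ) (h : ∀ t : ℝ, 0 ≤ a*t^2 + b*t) : b = 0 := by
  by_contra hb
  have ha : (0:ℝ) < a^2+1 := by positivity
  have h1 := h (-b/(a^2+1))
  have heq : a*(-b/(a^2+1))^2 + b*(-b/(a^2+1)) = (b^2*(a - (a^2+1)))/(a^2+1)^2 := by
    field_simp; ring
  rw [heq] at h1
  have hneg : a - (a^2+1) < 0 := by nlinarith [sq_nonneg (a-1)]
  have hb2 : 0 < b^2 := by positivity
  rw [le_div_iff₀ (by positivity)] at h1
  nlinarith

lemma feas_aux17 (x₁ x₂ x₃ : ℝ)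
    (h : ((!![1,0,0,0; 0,1,0,0; 0,0,0,0; 0,0,0,0]
        - x₁ • !![1,0,0,0; 0,0,0,0; 0,0,0,0; 0,0,0,0]
        - x₂ • !![0,0,1,0; 0,1,0,0; 1,0,0,0; 0,0,0,0]
        - x₃ • !![0,0,0,0; 0,0,0,1; 0,0,1,0; 0,1,0,0] : Matrix (Fin 4) (Fin 4) ℝ)).PosSemidef) :
    x₂ = 0 ∧ x₃ = 0 := by
  have key : ∀ y : Fin 4 → ℝ, 0 ≤ y ⬝ᵥ ((!![1,0,0,0; 0,1,0,0; 0,0,0,0; 0,0,0,0]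
        - x₁ • !![1,0,0,0; 0,0,0,0; 0,0,0,0; 0,0,0,0]
        - x₂ • !![0,0,1,0; 0,1,0,0; 1,0,0,0; 0,0,0,0]
        - x₃ • !![0,0,0,0; 0,0,0,1; 0,0,1,0; 0,1,0,0] : Matrix (Fin 4) (Fin 4) ℝ) *ᵥ y) := by
    intro y
    simpa using h.dotProduct_mulVec_nonneg y
  have h3 : x₃ = 0 := by
    have hq : ∀ t : ℝ, 0 ≤ (1 - x₂)*t^2 + (-2*x₃)*t := by
      intro t
      have := key ![0, t, 0, 1]
      simp [mulVec, dotProduct, Fin.sum_univ_four, Matrix.sub_apply, Matrix.smul_apply, Matrix.vecHead, Matrix.vecTail] at this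
      nlinarith [this]
    have := quad_aux17 _ _ hq
    linarith
  subst h3
  have h2 : x₂ = 0 := by
    have hq : ∀ t : ℝ, 0 ≤ (1 - x₁)*t^2 + (-2*x₂)*t := by
      intro t
      have := key ![t, 0, 1, 0]
      simp [mulVec, dotProduct, Fin.sum_univ_four, Matrix.sub_apply, Matrix.smul_apply, Matrix.vecHead, Matrix.vecTail] at this
      nlinarith [this]
    have := quad_aux17 _ _ hq
    linarith
  exact ⟨h2, rfl⟩

/-- For the 4×4 SDP `sup x₂ + x₃ s.t. x₁A₁ + x₂A₂ + x₃A₃ ⪯ B`, every feasible `x` has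
`x₂ = x₃ = 0`, and the optimal value is `0`. -/
theorem stmt_17 :
    (∀ x₁ x₂ x₃ : ℝ,
      ((!![1,0,0,0; 0,1,0,0; 0,0,0,0; 0,0,0,0]
        - x₁ • !![1,0,0,0; 0,0,0,0; 0,0,0,0; 0,0,0,0]
        - x₂ • !![0,0,1,0; 0,1,0,0; 1,0,0,0; 0,0,0,0]
        - x₃ • !![0,0,0,0; 0,0,0,1; 0,0,1,0; 0,1,0,0] : Matrix (Fin 4) (Fin 4) ℝ)).PosSemidef →
        x₂ = 0 ∧ x₃ = 0) ∧
    IsGreatest {v : ℝ | ∃ x₁ x₂ x₃ : ℝ,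
      ((!![1,0,0,0; 0,1,0,0; 0,0,0,0; 0,0,0,0]
        - x₁ • !![1,0,0,0; 0,0,0,0; 0,0,0,0; 0,0,0,0]
        - x₂ • !![0,0,1,0; 0,1,0,0; 1,0,0,0; 0,0,0,0]
        - x₃ • !![0,0,0,0; 0,0,0,1; 0,0,1,0; 0,1,0,0] : Matrix (Fin 4) (Fin 4) ℝ)).PosSemidef ∧
      v = x₂ + x₃} 0 := by
  refine ⟨fun x₁ x₂ x₃ h => feas_aux17 x₁ x₂ x₃ h, ⟨0, 0, 0, ?_, by ring⟩, ?_⟩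
  · rw [posSemidef_iff_dotProduct_mulVec]
    constructor
    · ext i j
      fin_cases i <;> fin_cases j <;>
        simp [Matrix.conjTranspose_apply, Matrix.sub_apply, Matrix.smul_apply, Matrix.vecHead, Matrix.vecTail]
    · intro y
      have : (star y ⬝ᵥ ((!![1,0,0,0; 0,1,0,0; 0,0,0,0; 0,0,0,0]
        - (0:ℝ) • !![1,0,0,0; 0,0,0,0; 0,0,0,0; 0,0,0,0]
        - (0:ℝ) • !![0,0,1,0; 0,1,0,0; 1,0,0,0; 0,0,0,0]
        - (0:ℝ) • !![0,0,0,0; 0,0,0,1; 0,0,1,0; 0,1,0,0] : Matrix (Fin 4) (Fin 4) ℝ)) *ᵥ y)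
          = y 0 * y 0 + y 1 * y 1 := by
        simp [mulVec, dotProduct, Fin.sum_univ_four, Matrix.sub_apply, Matrix.smul_apply, Matrix.vecHead, Matrix.vecTail]
      rw [this]
      nlinarith [sq_nonneg (y 0), sq_nonneg (y 1)]
  · rintro v ⟨x₁, x₂, x₃, h, rfl⟩
    obtain ⟨h2, h3⟩ := feas_aux17 x₁ x₂ x₃ h
    simp [h2, h3]
end

section
/- For the SDP of the previous context, every dual feasible Y (i.e., Y ⪰ 0 with ⟨A₁,Y⟩ = 0, ⟨A₂,Y⟩ = 1, ⟨A₃,Y⟩ = 1) has objective value ⟨B,Y⟩ = 1. Hence the SDP primal-dual pair has a positive duality gap of 1. -/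
open Matrix

/-- For the 4×4 SDP with `A₁ = E₁₁`, `A₂ = E₂₂ + E₁₃ + E₃₁`, `A₃ = E₃₃ + E₂₄ + E₄₂`,
`B = E₁₁ + E₂₂`: every dual feasible `Y` has objective value `⟨B, Y⟩ = 1` (while the primal
optimal value is `0`, giving a duality gap of `1`). -/
theorem stmt_18 (Y : Matrix (Fin 4) (Fin 4) ℝ) (hY : Y.PosSemidef)
    (h1 : ((!![1,0,0,0; 0,0,0,0; 0,0,0,0; 0,0,0,0] : Matrix (Fin 4) (Fin 4) ℝ) * Y).trace = 0)
    (h2 : ((!![0,0,1,0; 0,1,0,0; 1,0,0,0; 0,0,0,0] : Matrix (Fin 4) (Fin 4) ℝ) * Y).trace = 1)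
    (h3 : ((!![0,0,0,0; 0,0,0,1; 0,0,1,0; 0,1,0,0] : Matrix (Fin 4) (Fin 4) ℝ) * Y).trace = 1) :
    ((!![1,0,0,0; 0,1,0,0; 0,0,0,0; 0,0,0,0] : Matrix (Fin 4) (Fin 4) ℝ) * Y).trace = 1 := by
  have h00 : Y 0 0 = 0 := by
    have := h1
    simp [Matrix.trace, Matrix.diag, Matrix.mul_apply, Fin.sum_univ_four, Matrix.vecHead, Matrix.vecTail, Function.comp] at this
    linarith
  have hsym : Y 2 0 = Y 0 2 := by
    have := hY.1
    have h := congrFun (congrFun this.symm 2) 0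
    simpa [Matrix.conjTranspose_apply] using h
  -- show Y 0 2 = 0 using PSD
  have h02 : Y 0 2 = 0 := by
    by_contra hne
    set a := Y 0 2 with ha
    -- choose t making quadratic negative
    set t : ℝ := -(Y 2 2 + 1) / (2 * a) with ht
    set v : Fin 4 → ℝ := fun i => if i = 0 then t else if i = 2 then 1 else 0 with hv
    have hpos := hY.dotProduct_mulVec_nonneg v
    have hval : star v ⬝ᵥ Y *ᵥ v = t * t * Y 0 0 + t * (Y 0 2 + Y 2 0) + Y 2 2 := by
      simp [dotProduct, Matrix.mulVec, hv, Fin.sum_univ_four]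
      ring
    rw [hval, h00, hsym] at hpos
    have h2a : 2 * a ≠ 0 := by
      intro h; apply hne; linarith [mul_eq_zero.mp h]
    have he : t * (a + a) = -(Y 2 2 + 1) := by
      have : t * (2 * a) = -(Y 2 2 + 1) := div_mul_cancel₀ _ h2a
      linarith [this]
    rw [← ha] at hpos
    nlinarith [he, hpos]
  have h20 : Y 2 0 = 0 := by rw [hsym, h02]
  have h11 : Y 1 1 = 1 := by
    have := h2
    simp [Matrix.trace, Matrix.diag, Matrix.mul_apply, Fin.sum_univ_four, Matrix.vecHead, Matrix.vecTail, Function.comp] at this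
    linarith
  simp [Matrix.trace, Matrix.diag, Matrix.mul_apply, Fin.sum_univ_four, Matrix.vecHead, Matrix.vecTail, Function.comp, h00, h11]
end
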